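/- Bottom-up evaluation can be incorrect on DAG-structured static attack trees: for the attack tree T = AND(OR(a,b), OR(b,c)) with shared leaf b, attribution α(a)=3, α(b)=1, α(c)=4 and the min-cost domain (ℕ∞, min, +), the bottom-up value min(3,1) + min(1,4) = 2 differs from the true metric min over minimal successful attacks of the sum of attribute values, which is 1 (achieved by the attack {b}). -/

import Mathlib

/-- bottom-up evaluation can be wrong on DAG-structured static
attack trees.  For `T = AND(OR(a,b), OR(b,c))` with shared leaf `b`,
attribution `α(a)=3, α(b)=1, α(c)=4` and the min-cost domain `(ℕ∞, min, +)`,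
the bottom-up value is `min(3,1) + min(1,4) = 2`, whereas the true metric
(the min over minimal successful attacks of the summed attributes) is `1`,
achieved by the attack `{b}`. -/
theorem stmt10 :
    let α : Fin 3 → ℕ∞ := ![3, 1, 4]
    -- structure function of AND(OR(a,b), OR(b,c)) with a = 0, b = 1, c = 2
    let f : Finset (Fin 3) → Prop := fun A => (0 ∈ A ∨ 1 ∈ A) ∧ (1 ∈ A ∨ 2 ∈ A)
    let minimal : Finset (Fin 3) → Prop := fun A => f A ∧ ∀ B ⊂ A, ¬ f B
    -- bottom-up value
    (min (α 0) (α 1) + min (α 1) (α 2) = 2) ∧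
    -- true metric
    (sInf {v : ℕ∞ | ∃ A, minimal A ∧ v = ∑ x ∈ A, α x} = 1) ∧
    -- witnessed by the minimal attack {b}
    minimal {1} ∧ (∑ x ∈ ({1} : Finset (Fin 3)), α x = 1) ∧
    -- the two values differ
    (2 : ℕ∞) ≠ 1 := by
  intro α f g
  have hmin : g {1} := by
    constructor
    · exact ⟨Or.inr (by decide), Or.inl (by decide)⟩
    · intro B hB hfB
      have : B = ∅ := by
        rcases Finset.eq_empty_or_nonempty B with h | h
        · exact h
        · exfalso
          have := Finset.ssubset_iff_subset_ne.mp hB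
          rcases h with ⟨x, hx⟩
          have hx1 : x = 1 := by
            have := this.1 hx; simpa using this
          subst hx1
          apply this.2
          apply Finset.Subset.antisymm this.1
          intro y hy; simp at hy; subst hy; exact hx
      subst this
      simp [f] at hfB
  have hsum : (∑ x ∈ ({1} : Finset (Fin 3)), α x = 1) := by simp [α]
  refine ⟨by norm_num [α, Matrix.cons_val_two], ?_, hmin, hsum, by decide⟩
  apply le_antisymm
  · exact sInf_le ⟨{1}, hmin, hsum.symm⟩
  · apply le_sInf
    rintro v ⟨A, ⟨hfA, -⟩, rfl⟩
    obtain ⟨x, hx⟩ : A.Nonempty := by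
      rcases hfA.1 with h | h <;> exact ⟨_, h⟩
    calc (1 : ℕ∞) ≤ α x := by fin_cases x <;> simp [α]
    _ ≤ ∑ y ∈ A, α y := Finset.single_le_sum (fun _ _ => zero_le) hx
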